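/- Let R be a commutative ring in which 2 is invertible, with finite index sets I and J. Let ψ be the R-algebra homomorphism from the polynomial ring R[X_i (i ∈ I), V_{j,k} ((j,k) ∈ J×J)] to the polynomial ring R[x_i (i ∈ I), y_j (j ∈ J)] determined by ψ(X_i) = x_i and ψ(V_{j,k}) = y_j·y_k. Then the kernel of ψ is the ideal generated by the elements V_{j,k} − V_{k,j} (j,k ∈ J) together with the elements V_{j,k}·V_{l,m} − V_{j,l}·V_{k,m} (j,k,l,m ∈ J). Consequently the quotient of R[X_i, V_{j,k}] by this ideal is isomorphic, via ψ, to the subalgebra of R[x_i, y_j] generated by the x_i and the products y_j·y_k. -/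

import Mathlib

open MvPolynomial

namespace KerSquareAux

noncomputable section

variable {R : Type*} [CommRing R] {I J : Type*}

/-- The product of the variables of a multiset. -/
def Q (R : Type*) [CommRing R] {σ : Type*} (M : Multiset σ) : MvPolynomial σ R :=
  (M.map X).prod

lemma Q_zero {σ : Type*} : Q R (0 : Multiset σ) = 1 := by simp [Q]

lemma Q_cons {σ : Type*} (s : σ) (M : Multiset σ) : Q R (s ::ₘ M) = X s * Q R M := by
  simp [Q]

lemma Q_add {σ : Type*} (M N : Multiset σ) : Q R (M + N) = Q R M * Q R N := by
  simp [Q]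

lemma Q_toMultiset {σ : Type*} (d : σ →₀ ℕ) :
    Q R d.toMultiset = monomial d 1 := by
  induction d using Finsupp.induction with
  | zero => simp [Q]
  | single_add a n f _ _ ih =>
      rw [Finsupp.toMultiset_add, Q_add, ih, monomial_single_add,
        Finsupp.toMultiset_single]
      congr 1
      simp [Q, Multiset.map_nsmul, Multiset.prod_nsmul]

lemma Q_eq_monomial {σ : Type*} [DecidableEq σ] (u : Multiset σ) :
    Q R u = monomial u.toFinsupp 1 := by
  rw [← Q_toMultiset, Multiset.toFinsupp_toMultiset]

/-- Expansion of a single variable. -/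
def e : I ⊕ J × J → Multiset (I ⊕ J)
  | .inl i => {.inl i}
  | .inr (j, k) => {.inr j, .inr k}

/-- Expansion of a multiset of variables. -/
def expand (M : Multiset (I ⊕ J × J)) : Multiset (I ⊕ J) := M.bind e

lemma expand_zero : expand (0 : Multiset (I ⊕ J × J)) = 0 := by simp [expand]

lemma expand_add (M N : Multiset (I ⊕ J × J)) :
    expand (M + N) = expand M + expand N := by simp [expand]

lemma expand_cons_inl (i : I) (M : Multiset (I ⊕ J × J)) :
    expand ((Sum.inl i) ::ₘ M) = Sum.inl i ::ₘ expand M := by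
  simp [expand, e, Multiset.singleton_add]

lemma expand_cons_inr (j k : J) (M : Multiset (I ⊕ J × J)) :
    expand ((Sum.inr (j, k)) ::ₘ M) = Sum.inr j ::ₘ Sum.inr k ::ₘ expand M := by
  simp [expand, e, Multiset.insert_eq_cons, Multiset.cons_add, Multiset.singleton_add]

lemma inl_mem_expand {i : I} {M : Multiset (I ⊕ J × J)} (h : Sum.inl i ∈ expand M) :
    Sum.inl i ∈ M := by
  rcases Multiset.mem_bind.1 h with ⟨s, hs, hmem⟩
  rcases s with i' | ⟨j, k⟩
  · simp only [e, Multiset.mem_singleton] at hmem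
    obtain rfl : i = i' := by injection hmem
    exact hs
  · simp [e, Multiset.mem_cons] at hmem

section Relations

variable (S : Ideal (MvPolynomial (I ⊕ J × J) R))
  (hsym : ∀ j k : J, (X (.inr (j, k)) - X (.inr (k, j)) : MvPolynomial (I ⊕ J × J) R) ∈ S)
  (hminor : ∀ j k l m : J,
    (X (.inr (j, k)) * X (.inr (l, m)) - X (.inr (j, l)) * X (.inr (k, m)) :
      MvPolynomial (I ⊕ J × J) R) ∈ S)

include hsym in
lemma extract_one (M : Multiset (I ⊕ J × J)) (a : J) (ha : (Sum.inr a : I ⊕ J) ∈ expand M) :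
    ∃ (b : J) (M₀ : Multiset (I ⊕ J × J)),
      expand M = Sum.inr a ::ₘ Sum.inr b ::ₘ expand M₀ ∧
      Q R M - X (.inr (a, b)) * Q R M₀ ∈ S := by
  induction M using Multiset.induction_on with
  | empty => simp [expand] at ha
  | cons s T ih =>
    rcases s with i | ⟨j, k⟩
    · rw [expand_cons_inl] at ha
      rcases Multiset.mem_cons.1 ha with h | ha'
      · exact absurd h (by simp)
      obtain ⟨b, M₀, h1, h2⟩ := ih ha'
      refine ⟨b, Sum.inl i ::ₘ M₀, ?_, ?_⟩
      · rw [expand_cons_inl, h1, expand_cons_inl, Multiset.cons_swap (Sum.inl i),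
          Multiset.cons_swap (Sum.inl i)]
      · have : Q R (Sum.inl i ::ₘ T) - X (.inr (a, b)) * Q R (Sum.inl i ::ₘ M₀) =
            X (.inl i) * (Q R T - X (.inr (a, b)) * Q R M₀) := by
          rw [Q_cons, Q_cons]; ring
        rw [this]
        exact Ideal.mul_mem_left _ _ h2
    · by_cases haj : a = j
      · subst haj
        exact ⟨k, T, expand_cons_inr a k T, by rw [Q_cons]; simp⟩
      by_cases hak : a = k
      · subst hak
        refine ⟨j, T, by rw [expand_cons_inr, Multiset.cons_swap], ?_⟩
        have : Q R (Sum.inr (j, a) ::ₘ T) - X (.inr (a, j)) * Q R T =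
            (X (.inr (j, a)) - X (.inr (a, j))) * Q R T := by
          rw [Q_cons]; ring
        rw [this]
        exact Ideal.mul_mem_right _ _ (hsym j a)
      · have ha' : (Sum.inr a : I ⊕ J) ∈ expand T := by
          rw [expand_cons_inr] at ha
          rcases Multiset.mem_cons.1 ha with h | h
          · exact absurd (by injection h) haj
          rcases Multiset.mem_cons.1 h with h' | h'
          · exact absurd (by injection h') hak
          · exact h'
        obtain ⟨b, M₀, h1, h2⟩ := ih ha'
        refine ⟨b, Sum.inr (j, k) ::ₘ M₀, ?_, ?_⟩
        · rw [expand_cons_inr, h1, expand_cons_inr]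
          rw [Multiset.cons_swap (Sum.inr k) (Sum.inr a), Multiset.cons_swap (Sum.inr j) (Sum.inr a),
            Multiset.cons_swap (Sum.inr k) (Sum.inr b), Multiset.cons_swap (Sum.inr j) (Sum.inr b)]
        · have : Q R (Sum.inr (j, k) ::ₘ T) - X (.inr (a, b)) * Q R (Sum.inr (j, k) ::ₘ M₀) =
              X (.inr (j, k)) * (Q R T - X (.inr (a, b)) * Q R M₀) := by
            rw [Q_cons, Q_cons]; ring
          rw [this]
          exact Ideal.mul_mem_left _ _ h2

include hsym hminor in
lemma extract_pair (M : Multiset (I ⊕ J × J)) (a b : J) (s : Multiset (I ⊕ J))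
    (h : expand M = Sum.inr a ::ₘ Sum.inr b ::ₘ s) :
    ∃ M₀ : Multiset (I ⊕ J × J),
      expand M₀ = s ∧ Q R M - X (.inr (a, b)) * Q R M₀ ∈ S := by
  have ha : (Sum.inr a : I ⊕ J) ∈ expand M := by rw [h]; exact Multiset.mem_cons_self _ _
  obtain ⟨c, M₁, h1, h2⟩ := extract_one S hsym M a ha
  rw [h1] at h
  have h' : (Sum.inr b : I ⊕ J) ::ₘ s = Sum.inr c ::ₘ expand M₁ :=
    ((Multiset.cons_inj_right (Sum.inr a : I ⊕ J)).1 h).symm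
  by_cases hbc : b = c
  · subst hbc
    refine ⟨M₁, ?_, h2⟩
    exact ((Multiset.cons_inj_right _).1 h').symm
  · have hb : (Sum.inr b : I ⊕ J) ∈ expand M₁ := by
      have : (Sum.inr b : I ⊕ J) ∈ Sum.inr c ::ₘ expand M₁ := by
        rw [← h']; exact Multiset.mem_cons_self _ _
      rcases Multiset.mem_cons.1 this with hh | hh
      · exact absurd (by injection hh) hbc
      · exact hh
    obtain ⟨d, M₂, h3, h4⟩ := extract_one S hsym M₁ b hb
    refine ⟨Sum.inr (c, d) ::ₘ M₂, ?_, ?_⟩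
    · rw [expand_cons_inr]
      have : (Sum.inr b : I ⊕ J) ::ₘ s =
          Sum.inr b ::ₘ Sum.inr c ::ₘ Sum.inr d ::ₘ expand M₂ := by
        rw [h', h3, Multiset.cons_swap]
      exact ((Multiset.cons_inj_right _).1 this).symm
    · have key : Q R M - X (.inr (a, b)) * Q R (Sum.inr (c, d) ::ₘ M₂) =
          (Q R M - X (.inr (a, c)) * Q R M₁) +
          X (.inr (a, c)) * (Q R M₁ - X (.inr (b, d)) * Q R M₂) +
          (X (.inr (a, c)) * X (.inr (b, d)) - X (.inr (a, b)) * X (.inr (c, d))) * Q R M₂ := by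
        rw [Q_cons]; ring
      rw [key]
      exact add_mem (add_mem h2 (Ideal.mul_mem_left _ _ h4))
        (Ideal.mul_mem_right _ _ (hminor a c b d))

include hsym hminor in
lemma congr_of_expand_eq :
    ∀ M M' : Multiset (I ⊕ J × J), expand M = expand M' → Q R M - Q R M' ∈ S := by
  intro M
  induction M using Multiset.induction_on with
  | empty =>
    intro M' h
    have : M' = 0 := by
      by_contra hne
      obtain ⟨s, hs⟩ := Multiset.exists_mem_of_ne_zero hne
      have hne' : e s ≠ 0 := by rcases s with i | ⟨j, k⟩ <;> simp [e]
      obtain ⟨x, hx⟩ := Multiset.exists_mem_of_ne_zero hne'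
      have : x ∈ expand M' := Multiset.mem_bind.2 ⟨s, hs, hx⟩
      rw [← h] at this
      simp [expand] at this
    simp [this]
  | cons s T ih =>
    intro M' h
    rcases s with i | ⟨a, b⟩
    · classical
      rw [expand_cons_inl] at h
      have hiM' : (Sum.inl i : I ⊕ J × J) ∈ M' := by
        apply inl_mem_expand (i := i) (M := M')
        rw [← h]; exact Multiset.mem_cons_self _ _
      obtain ⟨M'', rfl⟩ : ∃ M'', M' = Sum.inl i ::ₘ M'' :=
        ⟨_, (Multiset.cons_erase hiM').symm⟩
      rw [expand_cons_inl] at h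
      have hTe : expand T = expand M'' := (Multiset.cons_inj_right _).1 h
      have := ih _ hTe
      have key : Q R (Sum.inl i ::ₘ T) - Q R (Sum.inl i ::ₘ M'') =
          X (.inl i) * (Q R T - Q R M'') := by
        rw [Q_cons, Q_cons]; ring
      rw [key]
      exact Ideal.mul_mem_left _ _ this
    · rw [expand_cons_inr] at h
      obtain ⟨M₀, hM₀, hmem⟩ := extract_pair S hsym hminor M' a b (expand T) h.symm
      have := ih M₀ hM₀.symm
      have key : Q R (Sum.inr (a, b) ::ₘ T) - Q R M' =
          X (.inr (a, b)) * (Q R T - Q R M₀) - (Q R M' - X (.inr (a, b)) * Q R M₀) := by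
        rw [Q_cons]; ring
      rw [key]
      exact sub_mem (Ideal.mul_mem_left _ _ this) hmem

end Relations

/-- Pair up consecutive elements of a list. -/
def pairUp : List J → List (J × J)
  | a :: b :: t => (a, b) :: pairUp t
  | _ => []

def iPart (u : Multiset (I ⊕ J)) : Multiset (I ⊕ J × J) :=
  u.filterMap (fun s => s.getLeft?.map Sum.inl)

def jPart (u : Multiset (I ⊕ J)) : Multiset J := u.filterMap Sum.getRight?

lemma split_eq (u : Multiset (I ⊕ J)) :
    u.filter (fun s => s.isLeft) + (jPart u).map Sum.inr = u := by
  induction u using Multiset.induction_on with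
  | empty => simp [jPart]
  | cons s T ih =>
    rcases s with i | j
    · rw [Multiset.filter_cons_of_pos _ (by simp), jPart,
        Multiset.filterMap_cons_none _ _ (by simp), Multiset.cons_add]
      rw [jPart] at ih; rw [ih]
    · rw [Multiset.filter_cons_of_neg _ (by simp), jPart,
        Multiset.filterMap_cons_some _ _ _ (rfl : Sum.getRight? (Sum.inr j : I ⊕ J) = some j),
        Multiset.map_cons, Multiset.add_cons]
      rw [jPart] at ih; rw [ih]

lemma expand_iPart (u : Multiset (I ⊕ J)) :
    expand (iPart u) = u.filter (fun s => s.isLeft) := by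
  induction u using Multiset.induction_on with
  | empty => simp [iPart, expand]
  | cons s T ih =>
    rcases s with i | j
    · rw [iPart, Multiset.filterMap_cons_some (fun s : I ⊕ J => s.getLeft?.map Sum.inl)
        _ _ (rfl : ((Sum.inl i : I ⊕ J).getLeft?.map Sum.inl) = some (Sum.inl i)),
        expand_cons_inl, Multiset.filter_cons_of_pos _ (by simp)]
      rw [iPart] at ih; rw [ih]
    · rw [iPart, Multiset.filterMap_cons_none (f := fun s : I ⊕ J => s.getLeft?.map Sum.inl)
        _ _ (by simp),
        Multiset.filter_cons_of_neg _ (by simp)]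
      rw [iPart] at ih; rw [ih]

lemma jPart_expand_even (M : Multiset (I ⊕ J × J)) :
    2 ∣ Multiset.card (jPart (expand M)) := by
  induction M using Multiset.induction_on with
  | empty => simp [jPart, expand]
  | cons s T ih =>
    rcases s with i | ⟨j, k⟩
    · rw [expand_cons_inl, jPart, Multiset.filterMap_cons_none _ _ (by simp)]
      exact ih
    · rw [expand_cons_inr, jPart,
        Multiset.filterMap_cons_some _ _ _ (rfl : Sum.getRight? (Sum.inr j : I ⊕ J) = some j),
        Multiset.filterMap_cons_some _ _ _ (rfl : Sum.getRight? (Sum.inr k : I ⊕ J) = some k)]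
      rw [jPart] at ih
      simp only [Multiset.card_cons]
      omega

lemma expand_pairUp (l : List J) (hl : 2 ∣ l.length) :
    expand (↑((pairUp l).map (Sum.inr : J × J → I ⊕ J × J)) : Multiset (I ⊕ J × J)) =
      (↑l : Multiset J).map (Sum.inr : J → I ⊕ J) := by
  induction l using pairUp.induct with
  | case1 a b t ih =>
    have ht : 2 ∣ t.length := by simp at hl; omega
    rw [pairUp]
    simp only [List.map_cons, ← Multiset.cons_coe, expand_cons_inr, ih ht,
      Multiset.map_cons]
  | case2 l hl' =>
    rcases l with _ | ⟨a, _ | ⟨b, t⟩⟩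
    · rw [show pairUp ([] : List J) = [] from rfl]
      simp [expand]
    · simp at hl
    · exact absurd rfl (hl' a b t)

section Contract

variable [LinearOrder J]

/-- A canonical preimage of a multiset of variables of the target ring. -/
def contract (u : Multiset (I ⊕ J)) : Multiset (I ⊕ J × J) :=
  iPart u + ↑((pairUp ((jPart u).sort (· ≤ ·))).map (Sum.inr : J × J → I ⊕ J × J))

lemma expand_contract (u : Multiset (I ⊕ J)) (hu : 2 ∣ Multiset.card (jPart u)) :
    expand (contract u) = u := by
  rw [contract, expand_add, expand_iPart, expand_pairUp _ (by
      rw [Multiset.length_sort]; exact hu),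
    Multiset.sort_eq, split_eq]

end Contract

end

end KerSquareAux

open KerSquareAux

/-- Let `R` be a commutative ring in which `2` is invertible, with finite
index sets `I` and `J`.  Let `ψ` be the `R`-algebra homomorphism from
`R[Xᵢ (i ∈ I), V_{j,k} ((j,k) ∈ J×J)]` to `R[xᵢ (i ∈ I), yⱼ (j ∈ J)]` determined by
`ψ(Xᵢ) = xᵢ` and `ψ(V_{j,k}) = yⱼ·yₖ`.  Then the kernel of `ψ` is the ideal generated by
the elements `V_{j,k} − V_{k,j}` together with `V_{j,k}·V_{l,m} − V_{j,l}·V_{k,m}`;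
consequently (`ψ` having the asserted range) the quotient of `R[Xᵢ, V_{j,k}]` by this ideal
is isomorphic, via `ψ`, to the subalgebra of `R[xᵢ, yⱼ]` generated by the `xᵢ` and the
products `yⱼ·yₖ`. -/
theorem ker_of_square_substitution
    (R : Type*) [CommRing R] [Invertible (2 : R)]
    (I J : Type*) [Finite I] [Finite J]
    (ψ : MvPolynomial (I ⊕ J × J) R →ₐ[R] MvPolynomial (I ⊕ J) R)
    (hX : ∀ i : I, ψ (X (Sum.inl i)) = X (Sum.inl i))
    (hV : ∀ jk : J × J, ψ (X (Sum.inr jk)) = X (Sum.inr jk.1) * X (Sum.inr jk.2)) :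
    RingHom.ker ψ.toRingHom =
      Ideal.span
        ((Set.range fun jk : J × J =>
            (X (Sum.inr (jk.1, jk.2)) - X (Sum.inr (jk.2, jk.1)) :
              MvPolynomial (I ⊕ J × J) R)) ∪
         (Set.range fun jklm : (J × J) × J × J =>
            (X (Sum.inr (jklm.1.1, jklm.1.2)) * X (Sum.inr (jklm.2.1, jklm.2.2)) -
             X (Sum.inr (jklm.1.1, jklm.2.1)) * X (Sum.inr (jklm.1.2, jklm.2.2)) :
              MvPolynomial (I ⊕ J × J) R))) ∧
    ψ.range =
      Algebra.adjoin R
        ((Set.range fun i : I => (X (Sum.inl i) : MvPolynomial (I ⊕ J) R)) ∪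
         (Set.range fun jk : J × J =>
            (X (Sum.inr jk.1) * X (Sum.inr jk.2) : MvPolynomial (I ⊕ J) R))) := by
  classical
  letI : LinearOrder J := linearOrderOfSTO WellOrderingRel
  constructor
  · -- the kernel computation
    set S : Ideal (MvPolynomial (I ⊕ J × J) R) :=
      Ideal.span
        ((Set.range fun jk : J × J =>
            (X (Sum.inr (jk.1, jk.2)) - X (Sum.inr (jk.2, jk.1)) :
              MvPolynomial (I ⊕ J × J) R)) ∪
         (Set.range fun jklm : (J × J) × J × J =>
            (X (Sum.inr (jklm.1.1, jklm.1.2)) * X (Sum.inr (jklm.2.1, jklm.2.2)) -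
             X (Sum.inr (jklm.1.1, jklm.2.1)) * X (Sum.inr (jklm.1.2, jklm.2.2)) :
              MvPolynomial (I ⊕ J × J) R))) with hS
    have hsym : ∀ j k : J,
        (X (.inr (j, k)) - X (.inr (k, j)) : MvPolynomial (I ⊕ J × J) R) ∈ S :=
      fun j k => Ideal.subset_span (Or.inl ⟨(j, k), rfl⟩)
    have hminor : ∀ j k l m : J,
        (X (.inr (j, k)) * X (.inr (l, m)) - X (.inr (j, l)) * X (.inr (k, m)) :
          MvPolynomial (I ⊕ J × J) R) ∈ S :=
      fun j k l m => Ideal.subset_span (Or.inr ⟨((j, k), (l, m)), rfl⟩)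
    -- `ψ` maps products of variables to products of expanded variables
    have psiQ : ∀ M : Multiset (I ⊕ J × J), ψ (Q R M) = Q R (expand M) := by
      intro M
      induction M using Multiset.induction_on with
      | empty => simp [Q_zero, expand_zero]
      | cons s T ih =>
        rcases s with i | ⟨j, k⟩
        · rw [Q_cons, map_mul, hX, ih, expand_cons_inl, Q_cons]
        · rw [Q_cons, map_mul, hV (j, k), ih, expand_cons_inr, Q_cons, Q_cons, mul_assoc]
    apply le_antisymm
    · -- the hard inclusion : the kernel is contained in the span
      intro p hp
      rw [RingHom.mem_ker] at hp
      have hp' : ψ p = 0 := hp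
      set π : MvPolynomial (I ⊕ J × J) R →ₐ[R] MvPolynomial (I ⊕ J × J) R ⧸ S :=
        Ideal.Quotient.mkₐ R S with hπ
      set N : ((I ⊕ J) →₀ ℕ) → MvPolynomial (I ⊕ J × J) R ⧸ S :=
        fun u => π (Q R (contract u.toMultiset)) with hN
      have key : ∀ q : MvPolynomial (I ⊕ J × J) R,
          π q = (AddMonoidAlgebra.coeff (ψ q)).sum fun u c => c • N u := by
        intro q
        induction q using MvPolynomial.induction_on' with
        | add q₁ q₂ ih₁ ih₂ =>
          rw [map_add, map_add, ih₁, ih₂, AddMonoidAlgebra.coeff_add,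
            Finsupp.sum_add_index' (fun u => zero_smul R (N u))
              (fun u c₁ c₂ => add_smul c₁ c₂ (N u))]
        | monomial d c =>
          have h1 : ψ (monomial d c) = monomial ((expand d.toMultiset).toFinsupp) c := by
            have : (monomial d c : MvPolynomial (I ⊕ J × J) R) =
                C c * monomial d 1 := by
              rw [C_mul_monomial, mul_one]
            rw [this, map_mul, algHom_C, ← Q_toMultiset, psiQ, Q_eq_monomial,
              MvPolynomial.algebraMap_eq, C_mul_monomial, mul_one]
          rw [h1, sum_monomial_eq (by rw [zero_smul])]
          have h2 : ((expand d.toMultiset).toFinsupp).toMultiset = expand d.toMultiset :=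
            Multiset.toFinsupp_toMultiset _
          rw [hN]
          simp only [h2]
          have h3 : π (Q R (contract (expand d.toMultiset))) = π (Q R d.toMultiset) := by
            rw [hπ, Ideal.Quotient.mkₐ_eq_mk, Ideal.Quotient.eq]
            exact congr_of_expand_eq S hsym hminor _ _
              (by rw [expand_contract _ (jPart_expand_even _)])
          rw [h3, Q_toMultiset, ← map_smul, smul_monomial, smul_eq_mul, mul_one]
      have : π p = 0 := by
        rw [key p, hp', AddMonoidAlgebra.coeff_zero, Finsupp.sum_zero_index]
      rwa [hπ, Ideal.Quotient.mkₐ_eq_mk, Ideal.Quotient.eq_zero_iff_mem] at this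
    · -- the easy inclusion : each generator is in the kernel
      rw [Ideal.span_le]
      rintro x (⟨jk, rfl⟩ | ⟨jklm, rfl⟩) <;>
      · simp only [SetLike.mem_coe, RingHom.mem_ker, AlgHom.toRingHom_eq_coe,
          RingHom.coe_coe, map_sub, map_mul, hV]
        ring
  · -- the range computation
    rw [← Algebra.map_top, ← MvPolynomial.adjoin_range_X, AlgHom.map_adjoin,
      ← Set.range_comp]
    congr 1
    ext q
    simp only [Set.mem_range, Function.comp_apply, Sum.exists, Set.mem_union, hX, hV,
      Prod.exists]
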